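/- arXiv:1104.3991 — 3 statements merged into one kernel-verified Lean document; each statement's English description precedes it below -/
import Mathlib

section
/- Let H be a finitely generated subgroup of F_k. Then the function n ↦ Prob[ α(w)(1) = 1 for all w ∈ H ], where α is a uniformly random homomorphism F_k → S_n, agrees with a rational function of n for all sufficiently large n: there exist polynomials p, q with integer coefficients and an integer N such that for all n ≥ N, q(n) ≠ 0 and Prob[ α(w)(1) = 1 for all w ∈ H ] = p(n)/q(n). -/
open Finset
namespace PRat




/-- If two maps have the same kernel on `s`, their images have the same cardinality. -/
theorem card_image_eq_of_ker {γ A B : Type*} [DecidableEq γ] [DecidableEq A] [DecidableEq B]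
    (s : Finset γ) (f : γ → A) (g : γ → B)
    (h : ∀ a ∈ s, ∀ b ∈ s, (f a = f b ↔ g a = g b)) :
    (s.image f).card = (s.image g).card := by
  classical
  induction s using Finset.induction_on with
  | empty => simp
  | @insert a s ha ih =>
    rw [Finset.image_insert, Finset.image_insert]
    have hmem : f a ∈ s.image f ↔ g a ∈ s.image g := by
      simp only [Finset.mem_image]
      constructor
      · rintro ⟨b, hb, hfb⟩
        exact ⟨b, hb, ((h b (by simp [hb]) a (by simp)).mp hfb)⟩
      · rintro ⟨b, hb, hgb⟩
        exact ⟨b, hb, ((h b (by simp [hb]) a (by simp)).mpr hgb)⟩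
    have ih' := ih (fun x hx y hy => h x (by simp [hx]) y (by simp [hy]))
    by_cases hc : f a ∈ s.image f
    · rw [Finset.card_insert_of_mem hc, Finset.card_insert_of_mem (hmem.mp hc), ih']
    · rw [Finset.card_insert_of_notMem hc,
        Finset.card_insert_of_notMem (fun hc' => hc (hmem.mpr hc')), ih']


section B1

variable {β : Type*} [Fintype β] [DecidableEq β]

/-- counting permutations extending a partial injection given by the pair set `D`. -/
theorem card_perm_extend (D : Finset (β × β))
    (hD : ∀ p ∈ D, ∀ p' ∈ D, (p.1 = p'.1 ↔ p.2 = p'.2)) :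
    (univ.filter (fun π : Equiv.Perm β => ∀ p ∈ D, π p.1 = p.2)).card
      = (Fintype.card β - D.card).factorial := by
  classical
  set A : Finset β := D.image Prod.fst with hA
  set B : Finset β := D.image Prod.snd with hB
  have hAcard : A.card = D.card :=
    Finset.card_image_of_injOn (fun p hp q hq hpq => Prod.ext hpq ((hD p hp q hq).mp hpq))
  have hBcard : B.card = D.card :=
    Finset.card_image_of_injOn (fun p hp q hq hpq => Prod.ext ((hD p hp q hq).mpr hpq) hpq)
  have hcA : Fintype.card {x : β // x ∉ A} = Fintype.card β - D.card := by
    rw [Fintype.card_subtype_compl, Fintype.card_coe, hAcard]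
  have hcB : Fintype.card {y : β // y ∉ B} = Fintype.card β - D.card := by
    rw [Fintype.card_subtype_compl, Fintype.card_coe, hBcard]
  -- the bijection
  have key : Fintype.card {π : Equiv.Perm β // ∀ p ∈ D, π p.1 = p.2}
      = Fintype.card ({x : β // x ∉ A} ≃ {y : β // y ∉ B}) := by
    apply Fintype.card_of_bijective (f := fun (π : {π : Equiv.Perm β // ∀ p ∈ D, π p.1 = p.2}) =>
      Equiv.ofBijective (fun x : {x : β // x ∉ A} => (⟨π.1 x.1, by
        intro hmem
        obtain ⟨p, hp, hp2⟩ := Finset.mem_image.mp hmem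
        exact x.2 (Finset.mem_image.mpr ⟨p, hp, (π.1.injective (by rw [π.2 p hp, hp2])).symm⟩)⟩
        : {y : β // y ∉ B}))
      (by
        refine (Fintype.bijective_iff_injective_and_card _).mpr ⟨?_, by rw [hcA, hcB]⟩
        intro x x' hxx'
        exact Subtype.ext (π.1.injective (congrArg Subtype.val hxx'))))
    constructor
    · rintro ⟨π, hπ⟩ ⟨π', hπ'⟩ hΦ
      refine Subtype.ext (Equiv.ext fun x => ?_)
      by_cases hx : x ∈ A
      · obtain ⟨p, hp, hp1⟩ := Finset.mem_image.mp hx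
        rw [← hp1, hπ p hp, hπ' p hp]
      · have := congrFun (congrArg (fun (e : _ ≃ _) => (e : {x : β // x ∉ A} → {y : β // y ∉ B}))
          hΦ) ⟨x, hx⟩
        simpa [Equiv.ofBijective] using congrArg Subtype.val this
    · intro e
      -- build the permutation extending D and agreeing with e off A
      have hpart : ∀ x, x ∈ A → ∃ p, p ∈ D ∧ p.1 = x := by
        intro x hx; obtain ⟨p, hp, h1⟩ := Finset.mem_image.mp hx; exact ⟨p, hp, h1⟩
      set g : β → β := fun x =>
        if hx : x ∈ A then (Classical.choose (hpart x hx)).2 else (e ⟨x, hx⟩).1 with hg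
      have hgA : ∀ p ∈ D, g p.1 = p.2 := by
        intro p hp
        have hx : p.1 ∈ A := Finset.mem_image.mpr ⟨p, hp, rfl⟩
        have hc := Classical.choose_spec (hpart p.1 hx)
        have : (Classical.choose (hpart p.1 hx)).2 = p.2 :=
          (hD _ hc.1 p hp).mp hc.2
        simp only [hg, dif_pos hx, this]
      have hgB : ∀ x (hx : x ∈ A), g x ∈ B := by
        intro x hx
        have hc := Classical.choose_spec (hpart x hx)
        simp only [hg, dif_pos hx]
        exact Finset.mem_image.mpr ⟨_, hc.1, rfl⟩
      have hgnB : ∀ x (hx : x ∉ A), g x ∉ B := fun x hx => by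
        simp only [hg, dif_neg hx]; exact (e ⟨x, hx⟩).2
      have hginj : Function.Injective g := by
        intro x x' hxx'
        by_cases hx : x ∈ A <;> by_cases hx' : x' ∈ A
        · have hc := Classical.choose_spec (hpart x hx)
          have hc' := Classical.choose_spec (hpart x' hx')
          simp only [hg, dif_pos hx, dif_pos hx'] at hxx'
          rw [← hc.2, ← hc'.2]
          exact (hD _ hc.1 _ hc'.1).mpr hxx'
        · exact absurd (hxx' ▸ hgB x hx) (hgnB x' hx')
        · exact absurd (hxx' ▸ hgnB x hx) (fun h => h (hgB x' hx'))
        · have : e ⟨x, hx⟩ = e ⟨x', hx'⟩ := by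
            apply Subtype.ext; simpa [hg, dif_neg hx, dif_neg hx'] using hxx'
          exact congrArg Subtype.val (e.injective this)
      have hgbij : Function.Bijective g := (Finite.injective_iff_bijective).mp hginj
      refine ⟨⟨Equiv.ofBijective g hgbij, hgA⟩, ?_⟩
      apply Equiv.ext
      rintro ⟨x, hx⟩
      apply Subtype.ext
      simp [Equiv.ofBijective, hg, dif_neg hx]
  have := Fintype.card_congr (Fintype.equivOfCardEq (hcA.trans hcB.symm))
  rw [Fintype.card_subtype] at key
  rw [key, Fintype.card_equiv (Fintype.equivOfCardEq (hcA.trans hcB.symm)), hcA]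


end B1

section C1

variable {β : Type*} [Fintype β] [DecidableEq β]

/-- number of equivalence classes of a boolean relation, defined via rows. -/
def nclasses {Pt : Type*} [Fintype Pt] [DecidableEq Pt] (κ : Pt → Pt → Bool) : ℕ :=
  ((univ : Finset Pt).image (fun a => univ.filter (fun b => κ a b))).card

theorem card_ker {Pt : Type*} [Fintype Pt] [DecidableEq Pt] (κ : Pt → Pt → Bool)
    (hrefl : ∀ a, κ a a = true) (hsymm : ∀ a b, κ a b = true → κ b a = true)
    (htrans : ∀ a b c, κ a b = true → κ b c = true → κ a c = true) (b₀ : Pt) (pt : β) :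
    (univ.filter (fun q : Pt → β => (∀ a b, (q a = q b ↔ κ a b = true)) ∧ q b₀ = pt)).card
      = (Fintype.card β - 1).descFactorial (nclasses κ - 1) := by
  classical
  set s : Setoid Pt := ⟨fun a b => κ a b = true,
    ⟨hrefl, fun {a b} h => hsymm a b h, fun {a b c} h h' => htrans a b c h h'⟩⟩ with hs
  letI : DecidableRel ((· ≈ ·) : Pt → Pt → Prop) := fun a b => by
    change Decidable (κ a b = true); infer_instance
  have hexact : ∀ a b : Pt, (⟦a⟧ : Quotient s) = ⟦b⟧ ↔ κ a b = true :=
    fun a b => ⟨fun h => Quotient.exact h, fun h => Quotient.sound h⟩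
  -- step 1 : nclasses κ = number of classes
  have hnc : nclasses κ = Fintype.card (Quotient s) := by
    set rowf : Pt → Finset Pt := fun a => univ.filter (fun b => κ a b) with hrowf
    have hcompat : ∀ a b : Pt, a ≈ b → rowf a = rowf b := by
      intro a b hab
      ext c
      simp only [hrowf, Finset.mem_filter, Finset.mem_univ, true_and]
      exact ⟨fun h => htrans b a c (hsymm a b hab) h, fun h => htrans a b c hab h⟩
    set rowQ : Quotient s → Finset Pt := Quotient.lift rowf hcompat with hrowQ
    have himg : (univ : Finset Pt).image rowf = (univ : Finset (Quotient s)).image rowQ := by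
      ext x
      simp only [Finset.mem_image, Finset.mem_univ, true_and]
      constructor
      · rintro ⟨a, rfl⟩; exact ⟨⟦a⟧, rfl⟩
      · rintro ⟨z, rfl⟩; obtain ⟨a, rfl⟩ := Quotient.exists_rep z; exact ⟨a, rfl⟩
    have hinj : Function.Injective rowQ := by
      intro x y
      induction x using Quotient.ind
      induction y using Quotient.ind
      rename_i a b
      intro h
      have hb : b ∈ rowf b := by simp [hrowf, hrefl]
      have : b ∈ rowf a := by rw [show rowf a = rowf b from h]; exact hb
      simp only [hrowf, Finset.mem_filter] at this
      exact Quotient.sound this.2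
    rw [nclasses, himg, Finset.card_image_of_injective _ hinj, Finset.card_univ]
  -- step 2 : bijection with embeddings
  have key : (univ.filter (fun q : Pt → β => (∀ a b, (q a = q b ↔ κ a b = true)) ∧ q b₀ = pt)).card
      = Fintype.card ({z : Quotient s // z ≠ ⟦b₀⟧} ↪ {y : β // y ≠ pt}) := by
    rw [← Fintype.card_subtype]
    apply Fintype.card_of_bijective (f := fun (q : {q : Pt → β //
        (∀ a b, (q a = q b ↔ κ a b = true)) ∧ q b₀ = pt}) =>
      (⟨fun z => ⟨Quotient.lift q.1 (fun a b hab => (q.2.1 a b).mpr hab) z.1, by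
          intro hpt
          apply z.2
          obtain ⟨a, ha⟩ := Quotient.exists_rep z.1
          rw [← ha] at hpt ⊢
          exact (hexact a b₀).mpr ((q.2.1 a b₀).mp (by
            rw [show Quotient.lift q.1 _ ⟦a⟧ = q.1 a from rfl] at hpt
            rw [hpt, q.2.2]))⟩, by
        rintro ⟨z, hz⟩ ⟨z', hz'⟩ h
        obtain ⟨a, rfl⟩ := Quotient.exists_rep z
        obtain ⟨a', rfl⟩ := Quotient.exists_rep z'
        have : q.1 a = q.1 a' := congrArg Subtype.val h
        exact Subtype.ext ((hexact a a').mpr ((q.2.1 a a').mp this))⟩ :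
        {z : Quotient s // z ≠ ⟦b₀⟧} ↪ {y : β // y ≠ pt}))
    constructor
    · rintro ⟨q, hq⟩ ⟨q', hq'⟩ h
      refine Subtype.ext (funext fun a => ?_)
      by_cases ha : (⟦a⟧ : Quotient s) = ⟦b₀⟧
      · have h1 : q a = pt := by rw [(hq.1 a b₀).mpr ((hexact a b₀).mp ha), hq.2]
        have h2 : q' a = pt := by rw [(hq'.1 a b₀).mpr ((hexact a b₀).mp ha), hq'.2]
        show q a = q' a
        rw [h1, h2]
      · have := congrFun (congrArg (fun (g : _ ↪ _) => (g : {z : Quotient s // z ≠ ⟦b₀⟧} →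
          {y : β // y ≠ pt})) h) ⟨⟦a⟧, ha⟩
        exact congrArg Subtype.val this
    · intro g
      set q : Pt → β := fun a => if h : (⟦a⟧ : Quotient s) = ⟦b₀⟧ then pt else (g ⟨⟦a⟧, h⟩).1
        with hqdef
      have hgne : ∀ z, ((g z : {y : β // y ≠ pt}) : β) ≠ pt := fun z => (g z).2
      have hker : ∀ a b, (q a = q b ↔ κ a b = true) := by
        intro a b
        by_cases ha : (⟦a⟧ : Quotient s) = ⟦b₀⟧ <;> by_cases hb : (⟦b⟧ : Quotient s) = ⟦b₀⟧
        · simp only [hqdef, dif_pos ha, dif_pos hb]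
          simpa using (hexact a b).mp (ha.trans hb.symm)
        · simp only [hqdef, dif_pos ha, dif_neg hb]
          constructor
          · intro h; exact absurd h.symm (hgne _)
          · intro h; exact absurd (((hexact a b).mpr h).symm.trans ha) hb
        · simp only [hqdef, dif_neg ha, dif_pos hb]
          constructor
          · intro h; exact absurd h (hgne _)
          · intro h; exact absurd (((hexact a b).mpr h).trans hb) ha
        · simp only [hqdef, dif_neg ha, dif_neg hb]
          constructor
          · intro h
            have := g.injective (Subtype.ext h)
            exact (hexact a b).mp (congrArg Subtype.val this)
          · intro h
            rw [show (⟨⟦a⟧, ha⟩ : {z : Quotient s // z ≠ ⟦b₀⟧}) = ⟨⟦b⟧, hb⟩ from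
              Subtype.ext ((hexact a b).mpr h)]
      refine ⟨⟨q, hker, dif_pos rfl⟩, ?_⟩
      apply DFunLike.ext
      rintro ⟨z, hz⟩
      obtain ⟨a, rfl⟩ := Quotient.exists_rep z
      exact Subtype.ext (dif_neg hz)
  rw [key, Fintype.card_embedding_eq, hnc]
  congr 1
  · rw [Fintype.card_subtype_compl, Fintype.card_subtype_eq]
  · rw [Fintype.card_subtype_compl, Fintype.card_subtype_eq]


end C1

section E1
-- (assume d.lean contents; re-declare minimal here for testing)
abbrev Pt (m L : ℕ) := Fin m × Fin (L + 1)

variable {k m L n : ℕ}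

def app (σ : Fin k → Equiv.Perm (Fin n)) (l : Fin k × Bool) : Equiv.Perm (Fin n) :=
  cond l.2 (σ l.1) (σ l.1)⁻¹

variable (r : Fin m → List (Fin k × Bool))

def path (σ : Fin k → Equiv.Perm (Fin n)) (pt : Fin n) (j : Fin m) (ℓ : ℕ) : Fin n :=
  ((r j).take ℓ).foldl (fun x l => app σ l x) pt

theorem path_succ (σ : Fin k → Equiv.Perm (Fin n)) (pt : Fin n) (j : Fin m) (ℓ : ℕ)
    (l : Fin k × Bool) (hl : (r j)[ℓ]? = some l) :
    path r σ pt j (ℓ + 1) = app σ l (path r σ pt j ℓ) := by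
  unfold path; rw [List.take_succ, hl, List.foldl_append]; rfl

theorem path_stab (σ : Fin k → Equiv.Perm (Fin n)) (pt : Fin n) (j : Fin m) (ℓ : ℕ)
    (hℓ : (r j).length ≤ ℓ) : path r σ pt j ℓ = path r σ pt j (r j).length := by
  unfold path; rw [List.take_of_length_le hℓ, List.take_of_length_le le_rfl]

-- positions
def succP {m L : ℕ} : Pt m L → Pt m L := fun a => (a.1, ⟨min (a.2.1 + 1) L, by omega⟩)

def pos (i : Fin k) : Finset (Pt m L × Pt m L) :=
  ((univ.filter fun a : Pt m L => (r a.1)[(a.2.1 : ℕ)]? = some (i, true)).image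
      fun a => (a, succP a)) ∪
  ((univ.filter fun a : Pt m L => (r a.1)[(a.2.1 : ℕ)]? = some (i, false)).image
      fun a => (succP a, a))

theorem mem_pos {i : Fin k} {pr : Pt m L × Pt m L} :
    pr ∈ pos r i ↔ (∃ a : Pt m L, (r a.1)[(a.2.1 : ℕ)]? = some (i, true) ∧ pr = (a, succP a)) ∨
      (∃ a : Pt m L, (r a.1)[(a.2.1 : ℕ)]? = some (i, false) ∧ pr = (succP a, a)) := by
  simp only [pos, mem_union, mem_image, mem_filter, mem_univ, true_and]
  constructor
  · rintro (⟨a, h1, h2⟩ | ⟨a, h1, h2⟩)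
    · exact Or.inl ⟨a, h1, h2.symm⟩
    · exact Or.inr ⟨a, h1, h2.symm⟩
  · rintro (⟨a, h1, h2⟩ | ⟨a, h1, h2⟩)
    · exact Or.inl ⟨a, h1, h2.symm⟩
    · exact Or.inr ⟨a, h1, h2.symm⟩

def endP (j : Fin m) : Fin (L + 1) := ⟨min (r j).length L, by omega⟩
def minP (j : Fin m) (ℓ : Fin (L + 1)) : Fin (L + 1) := ⟨min ℓ.1 (r j).length, by omega⟩
def zeroP {L : ℕ} : Fin (L + 1) := ⟨0, by omega⟩
def b0 (hm : 0 < m) : Pt m L := (⟨0, hm⟩, zeroP)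

section PathLemmas
variable (σ : Fin k → Equiv.Perm (Fin n)) (pt : Fin n)

def pathF (σ : Fin k → Equiv.Perm (Fin n)) (pt : Fin n) : Pt m L → Fin n :=
  fun a => path r σ pt a.1 a.2.1

theorem pathF_start (j : Fin m) : pathF (L := L) r σ pt (j, zeroP) = pt := rfl

theorem pathF_stab (j : Fin m) (ℓ : Fin (L + 1)) :
    pathF r σ pt (j, ℓ) = pathF r σ pt (j, minP r j ℓ) := by
  unfold pathF minP
  rcases le_or_gt ℓ.1 ((r j).length) with h | h
  · simp [min_eq_left h]
  · simp only
    rw [min_eq_right h.le, path_stab r σ pt j ℓ.1 h.le]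

theorem pathF_demands (hlen : ∀ j, (r j).length ≤ L) (i : Fin k) (pr : Pt m L × Pt m L) (hpr : pr ∈ pos r i) :
    σ i (pathF r σ pt pr.1) = pathF r σ pt pr.2 := by
  rcases (mem_pos r).mp hpr with ⟨a, h1, rfl⟩ | ⟨a, h1, rfl⟩
  · have hlt : (a.2.1 : ℕ) < (r a.1).length := by
      have := List.getElem?_eq_some_iff.mp h1; exact this.1
    have hle : a.2.1 + 1 ≤ L := by have := hlen a.1; omega
    show σ i (pathF r σ pt a) = pathF r σ pt (succP a)
    unfold pathF succP
    simp only
    rw [min_eq_left hle, path_succ r σ pt a.1 a.2.1 (i, true) h1]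
    rfl
  · have hlt : (a.2.1 : ℕ) < (r a.1).length := by
      have := List.getElem?_eq_some_iff.mp h1; exact this.1
    have hle : a.2.1 + 1 ≤ L := by have := hlen a.1; omega
    show σ i (pathF r σ pt (succP a)) = pathF r σ pt a
    unfold pathF succP
    simp only
    rw [min_eq_left hle, path_succ r σ pt a.1 a.2.1 (i, false) h1]
    show σ i ((σ i)⁻¹ (path r σ pt a.1 a.2.1)) = _
    exact (σ i).apply_symm_apply _

theorem path_reconstruct (hlen : ∀ j, (r j).length ≤ L) (q : Pt m L → Fin n)
    (hstart : ∀ j, q (j, zeroP) = pt)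
    (hstab : ∀ j ℓ, q (j, ℓ) = q (j, minP r j ℓ))
    (hdem : ∀ i, ∀ pr ∈ pos r i, σ i (q pr.1) = q pr.2) :
    pathF r σ pt = q := by
  funext a
  rcases a with ⟨j, ℓf⟩
  suffices h : ∀ ℓ : ℕ, ∀ hℓ : ℓ ≤ L, path r σ pt j ℓ = q (j, ⟨ℓ, by omega⟩) by
    have := h ℓf.1 (by omega)
    unfold pathF
    simpa using this
  intro ℓ
  induction ℓ using Nat.strong_induction_on with
  | _ ℓ ih =>
    match ℓ with
    | 0 => intro _; exact (hstart j).symm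
    | (ℓ' + 1) =>
      intro hℓ
      rcases Nat.lt_or_ge ℓ' (r j).length with hlt | hge
      · have h1 : (r j)[ℓ']? = some ((r j)[ℓ']'hlt) := List.getElem?_eq_some_iff.mpr ⟨hlt, rfl⟩
        set a : Pt m L := (j, ⟨ℓ', by omega⟩) with ha
        have hsucc : succP a = (j, (⟨ℓ' + 1, by omega⟩ : Fin (L+1))) := by
          unfold succP
          simp only [ha]
          congr 1
          exact Fin.ext (by simp; omega)
        rcases hb : (r j)[ℓ']'hlt with ⟨i, b⟩
        have hpath := path_succ r σ pt j ℓ' ((r j)[ℓ']'hlt) h1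
        cases b
        · have hmem : (succP a, a) ∈ pos r i := by
            rw [mem_pos]
            exact Or.inr ⟨a, by rw [show (r a.1) = r j from rfl]; rw [h1, hb], rfl⟩
          have hd := hdem i _ hmem
          simp only at hd
          rw [hsucc] at hd
          rw [hpath, hb]
          show (σ i)⁻¹ (path r σ pt j ℓ') = _
          rw [ih ℓ' (by omega) (by omega)]
          rw [show q (j, ⟨ℓ', by omega⟩) = q a from rfl, ← hd]
          exact (σ i).symm_apply_apply _
        · have hmem : (a, succP a) ∈ pos r i := by
            rw [mem_pos]
            exact Or.inl ⟨a, by rw [show (r a.1) = r j from rfl]; rw [h1, hb], rfl⟩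
          have hd := hdem i _ hmem
          simp only at hd
          rw [hsucc] at hd
          rw [hpath, hb]
          show σ i (path r σ pt j ℓ') = _
          rw [ih ℓ' (by omega) (by omega)]
          rw [show q (j, ⟨ℓ', by omega⟩) = q a from rfl, hd]
      · have h1 : path r σ pt j (ℓ' + 1) = path r σ pt j (r j).length :=
          path_stab r σ pt j (ℓ' + 1) (by omega)
        have h2 := ih (r j).length (by omega) (by have := hlen j; omega)
        rw [h1, h2]
        have := hstab j ⟨ℓ' + 1, by omega⟩
        rw [this]
        congr 2
        unfold minP
        exact Fin.ext (by simp; omega)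

end PathLemmas

end E1

section FG
variable {k m L n : ℕ} (r : Fin m → List (Fin k × Bool))

/-- evaluating a free group element at a point equals the path along its reversed word. -/
theorem freeGroup_eval (σ : Fin k → Equiv.Perm (Fin n)) (pt : Fin n) (w : FreeGroup (Fin k)) :
    (FreeGroup.lift σ w) pt = (w.toWord.reverse).foldl (fun x l => app σ l x) pt := by
  conv_lhs => rw [← FreeGroup.mk_toWord (x := w)]
  rw [FreeGroup.lift_mk, List.foldl_reverse]
  induction w.toWord with
  | nil => rfl
  | cons a t ih =>
    rw [List.map_cons, List.prod_cons, Equiv.Perm.mul_apply, List.foldr_cons, ih]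
    rcases a with ⟨i, b⟩
    cases b <;> rfl
end FG

section F1
section Count
variable {k m L n : ℕ} (r : Fin m → List (Fin k × Bool))

def row (κ : Pt m L → Pt m L → Bool) (a : Pt m L) : Finset (Pt m L) :=
  univ.filter (fun b => κ a b)

theorem nclasses_eq_row (κ : Pt m L → Pt m L → Bool) :
    nclasses κ = ((univ : Finset (Pt m L)).image (row κ)).card := rfl

def ecnt (κ : Pt m L → Pt m L → Bool) (i : Fin k) : ℕ :=
  ((pos r i).image (fun pr => (row κ pr.1, row κ pr.2))).card

theorem row_eq_iff (κ : Pt m L → Pt m L → Bool)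
    (hrefl : ∀ a, κ a a = true) (hsymm : ∀ a b, κ a b = true → κ b a = true)
    (htrans : ∀ a b c, κ a b = true → κ b c = true → κ a c = true) (a b : Pt m L) :
    row κ a = row κ b ↔ κ a b = true := by
  constructor
  · intro h
    have hb : b ∈ row κ b := by simp [row, hrefl]
    rw [← h] at hb
    simpa [row] using hb
  · intro h
    ext c
    simp only [row, mem_filter, mem_univ, true_and]
    exact ⟨fun h' => htrans b a c (hsymm a b h) h', fun h' => htrans a b c h h'⟩

def Valid (hm : 0 < m) (κ : Pt m L → Pt m L → Bool) : Prop :=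
  (∀ a, κ a a = true) ∧ (∀ a b, κ a b = true → κ b a = true) ∧
  (∀ a b c, κ a b = true → κ b c = true → κ a c = true) ∧
  (∀ j : Fin m, κ (j, zeroP) (b0 hm) = true) ∧
  (∀ j ℓ, κ (j, ℓ) (j, minP r j ℓ) = true) ∧
  (∀ j, κ (j, endP r j) (b0 hm) = true) ∧
  (∀ i : Fin k, ∀ pr ∈ pos r i, ∀ pr' ∈ pos r i, (κ pr.1 pr'.1 = true ↔ κ pr.2 pr'.2 = true))

noncomputable instance (hm : 0 < m) : DecidablePred (Valid (L := L) r hm) := fun κ =>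
  Classical.dec _

def kerF (q : Pt m L → Fin n) : Pt m L → Pt m L → Bool := fun a b => decide (q a = q b)

theorem kerF_eq_iff (q : Pt m L → Fin n) (κ : Pt m L → Pt m L → Bool) :
    kerF q = κ ↔ ∀ a b, (q a = q b ↔ κ a b = true) := by
  constructor
  · intro h a b
    rw [← h]
    simp [kerF]
  · intro h
    funext a b
    rcases hc : κ a b with _ | _
    · simpa [kerF, hc] using fun h' => by simpa [hc] using (h a b).mp h'
    · simp [kerF, hc, (h a b).mpr hc]

def okq (pt : Fin n) (q : Pt m L → Fin n) : Prop :=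
  (∀ j, q (j, zeroP) = pt) ∧ (∀ j ℓ, q (j, ℓ) = q (j, minP r j ℓ)) ∧
  (∀ j, q (j, endP r j) = pt)

instance (pt : Fin n) : DecidablePred (okq (L := L) r pt) := fun q => by
  unfold okq; infer_instance

def extCnt (q : Pt m L → Fin n) (i : Fin k) : ℕ :=
  (univ.filter (fun π : Equiv.Perm (Fin n) => ∀ pr ∈ pos r i, π (q pr.1) = q pr.2)).card

/-- per-path fiber count. -/
theorem fiber_card (hlen : ∀ j, (r j).length ≤ L) (pt : Fin n) (q : Pt m L → Fin n) :
    ((univ.filter (fun σ : Fin k → Equiv.Perm (Fin n) =>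
        ∀ j, pathF (L := L) r σ pt (j, endP r j) = pt)).filter
          (fun σ => pathF r σ pt = q)).card
      = if okq r pt q then ∏ i : Fin k, extCnt r q i else 0 := by
  rw [Finset.filter_filter]
  by_cases hok : okq r pt q
  · rw [if_pos hok]
    have hset : (univ.filter (fun σ : Fin k → Equiv.Perm (Fin n) =>
        (∀ j, pathF (L := L) r σ pt (j, endP r j) = pt) ∧ pathF r σ pt = q))
        = univ.filter (fun σ => ∀ i, ∀ pr ∈ pos r i, σ i (q pr.1) = q pr.2) := by
      apply Finset.filter_congr
      intro σ _
      constructor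
      · rintro ⟨_, rfl⟩
        exact fun i pr hpr => pathF_demands r σ pt hlen i pr hpr
      · intro hdem
        have hq : pathF r σ pt = q :=
          path_reconstruct r σ pt hlen q hok.1 hok.2.1 hdem
        exact ⟨fun j => by rw [hq]; exact hok.2.2 j, hq⟩
    rw [hset, ← Fintype.card_subtype]
    rw [Fintype.card_congr (Equiv.subtypePiEquivPi
      (p := fun i (π : Equiv.Perm (Fin n)) => ∀ pr ∈ pos r i, π (q pr.1) = q pr.2)),
      Fintype.card_pi]
    exact Finset.prod_congr rfl fun i _ => Fintype.card_subtype _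
  · rw [if_neg hok]
    rw [Finset.card_eq_zero, Finset.filter_eq_empty_iff]
    rintro σ _ ⟨hC, rfl⟩
    exact hok ⟨fun j => pathF_start r σ pt j, fun j ℓ => pathF_stab r σ pt j ℓ, hC⟩

/-- extension count at the kernel level. -/
theorem extCnt_eq (hm : 0 < m) (κ : Pt m L → Pt m L → Bool) (hval : Valid r hm κ)
    (q : Pt m L → Fin n) (hker : ∀ a b, (q a = q b ↔ κ a b = true)) (i : Fin k) :
    extCnt r q i = (n - ecnt r κ i).factorial := by
  obtain ⟨hrefl, hsymm, htrans, -, -, -, hbij⟩ := hval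
  set D : Finset (Fin n × Fin n) := (pos r i).image (fun pr => (q pr.1, q pr.2)) with hD
  have hpred : ∀ π : Equiv.Perm (Fin n),
      (∀ pr ∈ pos r i, π (q pr.1) = q pr.2) ↔ (∀ p ∈ D, π p.1 = p.2) := by
    intro π
    constructor
    · intro h p hp
      obtain ⟨pr, hpr, rfl⟩ := Finset.mem_image.mp hp
      exact h pr hpr
    · intro h pr hpr
      exact h _ (Finset.mem_image.mpr ⟨pr, hpr, rfl⟩)
  have hDfun : ∀ p ∈ D, ∀ p' ∈ D, (p.1 = p'.1 ↔ p.2 = p'.2) := by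
    rintro p hp p' hp'
    obtain ⟨pr, hpr, rfl⟩ := Finset.mem_image.mp hp
    obtain ⟨pr', hpr', rfl⟩ := Finset.mem_image.mp hp'
    simp only
    rw [hker pr.1 pr'.1, hker pr.2 pr'.2]
    exact hbij i pr hpr pr' hpr'
  have hcard : D.card = ecnt r κ i := by
    rw [hD, ecnt]
    apply card_image_eq_of_ker
    intro a ha b hb
    simp only [Prod.ext_iff]
    rw [hker a.1 b.1, hker a.2 b.2,
      row_eq_iff κ hrefl hsymm htrans a.1 b.1, row_eq_iff κ hrefl hsymm htrans a.2 b.2]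
  unfold extCnt
  rw [Finset.filter_congr (fun π _ => hpred π), card_perm_extend D hDfun, hcard,
    Fintype.card_fin]

/-- per-kernel fiber sum. -/
theorem kernel_fiber_sum (hm : 0 < m) (hn : 0 < n) (pt : Fin n)
    (κ : Pt m L → Pt m L → Bool) :
    (∑ q ∈ univ.filter (fun q : Pt m L → Fin n => kerF q = κ),
      if okq r pt q then ∏ i : Fin k, extCnt r q i else 0)
      = if Valid r hm κ then
          ((n - 1).descFactorial (nclasses κ - 1)) * ∏ i : Fin k, (n - ecnt r κ i).factorial
        else 0 := by
  by_cases hval : Valid r hm κ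
  · rw [if_pos hval]
    obtain ⟨hrefl, hsymm, htrans, hstart, hstab, hends, hbij⟩ := hval
    have claim0 : ∀ q : Pt m L → Fin n, kerF q = κ → (okq r pt q ↔ q (b0 hm) = pt) := by
      intro q hk
      have hker := (kerF_eq_iff q κ).mp hk
      constructor
      · intro hok
        exact hok.1 ⟨0, hm⟩
      · intro hb
        refine ⟨fun j => ?_, fun j ℓ => ?_, fun j => ?_⟩
        · rw [(hker _ _).mpr (hstart j), hb]
        · exact (hker _ _).mpr (hstab j ℓ)
        · rw [(hker _ _).mpr (hends j), hb]
    have hsum : (∑ q ∈ univ.filter (fun q : Pt m L → Fin n => kerF q = κ),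
        if okq r pt q then ∏ i : Fin k, extCnt r q i else 0)
        = ∑ q ∈ univ.filter (fun q : Pt m L → Fin n => kerF q = κ),
          (if q (b0 hm) = pt then ∏ i : Fin k, (n - ecnt r κ i).factorial else 0) := by
      apply Finset.sum_congr rfl
      intro q hq
      rw [Finset.mem_filter] at hq
      have hker := (kerF_eq_iff q κ).mp hq.2
      by_cases hok : okq r pt q
      · rw [if_pos hok, if_pos ((claim0 q hq.2).mp hok)]
        exact Finset.prod_congr rfl fun i _ =>
          extCnt_eq r hm κ ⟨hrefl, hsymm, htrans, hstart, hstab, hends, hbij⟩ q hker i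
      · rw [if_neg hok, if_neg (fun hb => hok ((claim0 q hq.2).mpr hb))]
    rw [hsum, ← Finset.sum_filter, Finset.sum_const, smul_eq_mul, Finset.filter_filter]
    congr 1
    have : (univ.filter (fun q : Pt m L → Fin n => kerF q = κ ∧ q (b0 hm) = pt))
        = univ.filter (fun q : Pt m L → Fin n =>
            (∀ a b, (q a = q b ↔ κ a b = true)) ∧ q (b0 hm) = pt) := by
      apply Finset.filter_congr
      intro q _
      rw [kerF_eq_iff]
    rw [this, card_ker κ hrefl hsymm htrans (b0 hm) pt, Fintype.card_fin]
  · rw [if_neg hval]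
    apply Finset.sum_eq_zero
    intro q hq
    rw [Finset.mem_filter] at hq
    have hker := (kerF_eq_iff q κ).mp hq.2
    by_cases hok : okq r pt q
    · rw [if_pos hok]
      -- derive all Valid components except bij; bij must fail
      have hrefl : ∀ a, κ a a = true := fun a => (hker a a).mp rfl
      have hsymm : ∀ a b, κ a b = true → κ b a = true :=
        fun a b h => (hker b a).mp ((hker a b).mpr h).symm
      have htrans : ∀ a b c, κ a b = true → κ b c = true → κ a c = true :=
        fun a b c h h' => (hker a c).mp (((hker a b).mpr h).trans ((hker b c).mpr h'))
      have hb0 : q (b0 hm) = pt := hok.1 ⟨0, hm⟩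
      have hstart : ∀ j : Fin m, κ (j, zeroP) (b0 hm) = true :=
        fun j => (hker _ _).mp (by rw [hok.1 j, hb0])
      have hstab : ∀ j ℓ, κ (j, ℓ) (j, minP r j ℓ) = true :=
        fun j ℓ => (hker _ _).mp (hok.2.1 j ℓ)
      have hends : ∀ j, κ (j, endP r j) (b0 hm) = true :=
        fun j => (hker _ _).mp (by rw [hok.2.2 j, hb0])
      by_cases hbij : (∀ i : Fin k, ∀ pr ∈ pos r i, ∀ pr' ∈ pos r i,
          (κ pr.1 pr'.1 = true ↔ κ pr.2 pr'.2 = true))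
      · exact absurd ⟨hrefl, hsymm, htrans, hstart, hstab, hends, hbij⟩ hval
      · push_neg at hbij
        obtain ⟨i, pr, hpr, pr', hpr', hne⟩ := hbij
        apply Finset.prod_eq_zero (Finset.mem_univ i)
        rw [extCnt, Finset.card_eq_zero, Finset.filter_eq_empty_iff]
        intro π _
        intro hdem
        rcases hne with ⟨h1, h2⟩ | ⟨h1, h2⟩
        · have hq1 : q pr.1 = q pr'.1 := (hker _ _).mpr h1
          have hq2 : q pr.2 ≠ q pr'.2 := fun h => h2 ((hker _ _).mp h)
          exact hq2 (by rw [← hdem pr hpr, ← hdem pr' hpr', hq1])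
        · have hq2 : q pr.2 = q pr'.2 := (hker _ _).mpr h2
          have hq1 : q pr.1 ≠ q pr'.1 := fun h => h1 ((hker _ _).mp h)
          apply hq1
          apply π.injective
          rw [hdem pr hpr, hdem pr' hpr', hq2]
    · rw [if_neg hok]

/-- the master counting identity. -/
theorem count_main (hm : 0 < m) (hn : 0 < n) (hlen : ∀ j, (r j).length ≤ L) (pt : Fin n) :
    (univ.filter (fun σ : Fin k → Equiv.Perm (Fin n) =>
        ∀ j, pathF (L := L) r σ pt (j, endP r j) = pt)).card
      = ∑ κ ∈ univ.filter (Valid (L := L) r hm),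
          ((n - 1).descFactorial (nclasses κ - 1)) * ∏ i : Fin k, (n - ecnt r κ i).factorial := by
  classical
  rw [Finset.card_eq_sum_card_fiberwise
    (f := fun σ => pathF r σ pt) (t := (univ : Finset (Pt m L → Fin n)))
    (fun x _ => Finset.mem_univ _)]
  have h1 : ∀ q ∈ (univ : Finset (Pt m L → Fin n)),
      ((univ.filter (fun σ : Fin k → Equiv.Perm (Fin n) =>
        ∀ j, pathF (L := L) r σ pt (j, endP r j) = pt)).filter
          (fun σ => pathF r σ pt = q)).card
      = if okq r pt q then ∏ i : Fin k, extCnt r q i else 0 :=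
    fun q _ => fiber_card r hlen pt q
  rw [Finset.sum_congr rfl h1]
  rw [← Finset.sum_fiberwise_of_maps_to
    (g := fun q : Pt m L → Fin n => kerF q) (t := univ) (fun x _ => Finset.mem_univ _)]
  have h2 : ∀ κ ∈ (univ : Finset (Pt m L → Pt m L → Bool)),
      (∑ q ∈ univ.filter (fun q : Pt m L → Fin n => kerF q = κ),
        if okq r pt q then ∏ i : Fin k, extCnt r q i else 0)
      = if Valid r hm κ then
          ((n - 1).descFactorial (nclasses κ - 1)) * ∏ i : Fin k, (n - ecnt r κ i).factorial
        else 0 := fun κ _ => kernel_fiber_sum r hm hn pt κ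
  rw [Finset.sum_congr rfl h2, Finset.sum_filter]

end Count

end F1

section G1
section Polyn
open Polynomial
variable {k m L : ℕ} (r : Fin m → List (Fin k × Bool))

/-- ℕ identity behind the rational function manipulation. -/
theorem fact_ratio (n e M : ℕ) (he : e ≤ M) (hM : M ≤ n) :
    (n - e).factorial * n.descFactorial M
      = n.factorial * (n - e).descFactorial (M - e) := by
  have h1 : (n - M).factorial * n.descFactorial M = n.factorial :=
    Nat.factorial_mul_descFactorial hM
  have h2 : ((n - e) - (M - e)).factorial * (n - e).descFactorial (M - e) = (n - e).factorial :=
    Nat.factorial_mul_descFactorial (by omega)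
  have h3 : (n - e) - (M - e) = n - M := by omega
  rw [h3] at h2
  apply Nat.eq_of_mul_eq_mul_left (Nat.factorial_pos (n - M))
  calc (n - M).factorial * ((n - e).factorial * n.descFactorial M)
      = (n - e).factorial * ((n - M).factorial * n.descFactorial M) := by ring
    _ = (n - e).factorial * n.factorial := by rw [h1]
    _ = ((n - M).factorial * (n - e).descFactorial (M - e)) * n.factorial := by rw [h2]
    _ = (n - M).factorial * (n.factorial * (n - e).descFactorial (M - e)) := by ring

noncomputable def P1 (κ : Pt m L → Pt m L → Bool) : Polynomial ℤ :=
  ∏ j ∈ Finset.range (nclasses κ - 1), (X - C ((j : ℤ) + 1))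

noncomputable def P2 (κ : Pt m L → Pt m L → Bool) (M : ℕ) (i : Fin k) : Polynomial ℤ :=
  ∏ j ∈ Finset.range (M - ecnt r κ i), (X - C ((ecnt r κ i + j : ℕ) : ℤ))

noncomputable def Q0 (M : ℕ) : Polynomial ℤ := ∏ j ∈ Finset.range M, (X - C (j : ℤ))

theorem Q0_eval (M n : ℕ) (h : M ≤ n) :
    (Q0 M).eval (n : ℤ) = (n.descFactorial M : ℤ) := by
  rw [Q0, Polynomial.eval_prod, Nat.descFactorial_eq_prod_range, Nat.cast_prod]
  apply Finset.prod_congr rfl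
  intro j hj
  rw [Finset.mem_range] at hj
  rw [Polynomial.eval_sub, Polynomial.eval_X, Polynomial.eval_C]
  omega

theorem P1_eval (κ : Pt m L → Pt m L → Bool) (n : ℕ) (h : nclasses κ ≤ n) :
    (P1 κ).eval (n : ℤ) = ((n - 1).descFactorial (nclasses κ - 1) : ℤ) := by
  rw [P1, Polynomial.eval_prod, Nat.descFactorial_eq_prod_range, Nat.cast_prod]
  apply Finset.prod_congr rfl
  intro j hj
  rw [Finset.mem_range] at hj
  rw [Polynomial.eval_sub, Polynomial.eval_X, Polynomial.eval_C]
  omega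

theorem P2_eval (κ : Pt m L → Pt m L → Bool) (M n : ℕ) (i : Fin k)
    (he : ecnt r κ i ≤ M) (h : M ≤ n) :
    (P2 r κ M i).eval (n : ℤ) = ((n - ecnt r κ i).descFactorial (M - ecnt r κ i) : ℤ) := by
  rw [P2, Polynomial.eval_prod, Nat.descFactorial_eq_prod_range, Nat.cast_prod]
  apply Finset.prod_congr rfl
  intro j hj
  rw [Finset.mem_range] at hj
  rw [Polynomial.eval_sub, Polynomial.eval_X, Polynomial.eval_C]
  push_cast
  omega

/-- the eventual rational behaviour of the count of `σ` tuples. -/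
theorem main_rat (hm : 0 < m) (hlen : ∀ j, (r j).length ≤ L) :
    ∃ (p q : Polynomial ℤ) (N : ℕ), 0 < N ∧ ∀ n : ℕ, N ≤ n →
      (q.eval (n : ℤ) ≠ 0) ∧ ∀ hn : 0 < n,
      ((Finset.univ.filter (fun σ : Fin k → Equiv.Perm (Fin n) =>
          ∀ j, pathF (L := L) r σ ⟨0, hn⟩ (j, endP r j) = ⟨0, hn⟩)).card : ℝ)
        / ((n.factorial : ℝ) ^ k)
      = ((p.eval (n : ℤ) : ℤ) : ℝ) / ((q.eval (n : ℤ) : ℤ) : ℝ) := by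
  classical
  set cP : ℕ := Fintype.card (Pt m L) with hcP
  set M : ℕ := cP * cP + 1 with hM
  set N : ℕ := M + cP + 1 with hN
  have hecnt : ∀ (κ : Pt m L → Pt m L → Bool) (i : Fin k), ecnt r κ i ≤ M := by
    intro κ i
    have h1 : ecnt r κ i ≤ (pos r i).card := Finset.card_image_le
    have h2 : (pos r i).card ≤ Fintype.card (Pt m L × Pt m L) := Finset.card_le_univ _
    rw [Fintype.card_prod, ← hcP] at h2
    omega
  have hncl : ∀ κ : Pt m L → Pt m L → Bool, nclasses κ ≤ cP := by
    intro κ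
    have := Finset.card_image_le (s := (Finset.univ : Finset (Pt m L)))
      (f := fun a => Finset.univ.filter (fun b => κ a b))
    rw [Finset.card_univ] at this
    exact this
  refine ⟨∑ κ ∈ Finset.univ.filter (Valid (L := L) r hm),
      P1 κ * ∏ i : Fin k, P2 r κ M i, (Q0 M) ^ k,
      N, by omega, ?_⟩
  intro n hn
  have hMn : M ≤ n := by omega
  have hn0 : 0 < n := by omega
  have hq0 : (Q0 M).eval (n : ℤ) ≠ 0 := by
    rw [Q0_eval M n hMn]
    have : 0 < n.descFactorial M := by
      rcases Nat.eq_zero_or_pos (n.descFactorial M) with h | h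
      · exact absurd (Nat.descFactorial_eq_zero_iff_lt.mp h) (by omega)
      · exact h
    exact_mod_cast this.ne'
  constructor
  · rw [Polynomial.eval_pow]
    exact pow_ne_zero k hq0
  intro hn'
  rw [count_main r hm hn0 hlen ⟨0, hn'⟩]
  -- cast the sum and divide term by term
  rw [Nat.cast_sum, Finset.sum_div]
  rw [Polynomial.eval_finset_sum]
  rw [Int.cast_sum, Polynomial.eval_pow]
  rw [Finset.sum_div]
  apply Finset.sum_congr rfl
  intro κ hκ
  -- per-κ identity
  have hv : nclasses κ ≤ cP := hncl κ
  have hnum : ∀ i : Fin k, (n - ecnt r κ i).factorial * n.descFactorial M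
      = n.factorial * (n - ecnt r κ i).descFactorial (M - ecnt r κ i) :=
    fun i => fact_ratio n (ecnt r κ i) M (hecnt κ i) hMn
  -- ℕ identity
  have hNat : ((n - 1).descFactorial (nclasses κ - 1) * ∏ i : Fin k, (n - ecnt r κ i).factorial)
        * (n.descFactorial M) ^ k
      = ((n - 1).descFactorial (nclasses κ - 1)
          * ∏ i : Fin k, (n - ecnt r κ i).descFactorial (M - ecnt r κ i))
        * (n.factorial) ^ k := by
    have hprod : (∏ i : Fin k, (n - ecnt r κ i).factorial) * (n.descFactorial M) ^ k
        = (∏ i : Fin k, (n - ecnt r κ i).descFactorial (M - ecnt r κ i)) * n.factorial ^ k := by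
      calc (∏ i : Fin k, (n - ecnt r κ i).factorial) * (n.descFactorial M) ^ k
          = ∏ i : Fin k, ((n - ecnt r κ i).factorial * n.descFactorial M) := by
            rw [Finset.prod_mul_distrib, Finset.prod_const, Finset.card_univ, Fintype.card_fin]
        _ = ∏ i : Fin k, (n.factorial * (n - ecnt r κ i).descFactorial (M - ecnt r κ i)) :=
            Finset.prod_congr rfl fun i _ => hnum i
        _ = (∏ i : Fin k, (n - ecnt r κ i).descFactorial (M - ecnt r κ i)) * n.factorial ^ k := by
            rw [Finset.prod_mul_distrib, Finset.prod_const, Finset.card_univ, Fintype.card_fin,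
              mul_comm]
    calc ((n - 1).descFactorial (nclasses κ - 1) * ∏ i : Fin k, (n - ecnt r κ i).factorial)
        * (n.descFactorial M) ^ k
        = (n - 1).descFactorial (nclasses κ - 1)
          * ((∏ i : Fin k, (n - ecnt r κ i).factorial) * (n.descFactorial M) ^ k) := by ring
      _ = (n - 1).descFactorial (nclasses κ - 1)
          * ((∏ i : Fin k, (n - ecnt r κ i).descFactorial (M - ecnt r κ i)) * n.factorial ^ k) :=
          by rw [hprod]
      _ = _ := by ring
  -- eval of numerator polynomial
  have hpeval : (P1 κ * ∏ i : Fin k, P2 r κ M i).eval (n : ℤ)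
      = ((n - 1).descFactorial (nclasses κ - 1)
          * ∏ i : Fin k, (n - ecnt r κ i).descFactorial (M - ecnt r κ i) : ℕ) := by
    rw [Polynomial.eval_mul, Polynomial.eval_prod, P1_eval κ n (by omega)]
    push_cast
    congr 1
    apply Finset.prod_congr rfl
    intro i _
    rw [P2_eval r κ M n i (hecnt κ i) hMn]
  rw [hpeval, Q0_eval M n hMn]
  have hd1 : ((n.factorial : ℝ)) ^ k ≠ 0 :=
    pow_ne_zero _ (Nat.cast_ne_zero.mpr (Nat.factorial_pos n).ne')
  have hd2 : (((n.descFactorial M : ℤ) : ℝ)) ^ k ≠ 0 := by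
    apply pow_ne_zero
    rw [← Q0_eval M n hMn]
    exact_mod_cast hq0
  rw [Int.cast_pow, div_eq_div_iff hd1 hd2]
  exact_mod_cast hNat
end Polyn

end G1

theorem Subgroup.fg_iff' {G : Type*} [Group G] (H : Subgroup G) :
    Group.FG ↥H ↔ ∃ S : Set G, Subgroup.closure S = H ∧ S.Finite := by
  rw [Group.fg_iff_subgroup_fg, _root_.Subgroup.fg_iff]

end PRat

/-- for a finitely generated subgroup `H ≤ F_k`, the probability that `1` is a
common fixed point of the image of `H` under a uniformly random homomorphism `F_k →* S_n`
agrees, for all sufficiently large `n`, with a rational function of `n`: there are integer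
polynomials `p, q` and `N : ℕ` such that for all `n ≥ N` the denominator does not vanish and
the probability equals `p(n) / q(n)`. -/
theorem prob_common_fixed_point_eventually_rational {k : ℕ}
    (H : Subgroup (FreeGroup (Fin k))) (hFG : Group.FG ↥H) :
    ∃ (p q : Polynomial ℤ) (N : ℕ), ∀ n : ℕ, N ≤ n →
      (q.eval (n : ℤ) ≠ 0) ∧
      (Nat.card {α : FreeGroup (Fin k) →* Equiv.Perm (Fin n) //
            ∀ w ∈ H, ∀ hn : 0 < n, α w ⟨0, hn⟩ = ⟨0, hn⟩} : ℝ) / ((n.factorial : ℝ) ^ k)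
        = (Int.cast (p.eval (n : ℤ)) : ℝ) / (Int.cast (q.eval (n : ℤ)) : ℝ) := by

  classical
  obtain ⟨Sset, hSclos, hSfin⟩ := (PRat.Subgroup.fg_iff' H).mp hFG
  set Sl : List (FreeGroup (Fin k)) := 1 :: hSfin.toFinset.toList with hSl
  set m : ℕ := Sl.length with hm'
  have hm : 0 < m := by simp [hm', hSl]
  set r : Fin m → List (Fin k × Bool) := fun j => (Sl.get j).toWord.reverse with hr
  set L : ℕ := Finset.univ.sup (fun j => (r j).length) with hL
  have hlen : ∀ j, (r j).length ≤ L := fun j => Finset.le_sup (f := fun j => (r j).length) (Finset.mem_univ j)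
  obtain ⟨p, q, N, hN0, hmain⟩ := PRat.main_rat r hm hlen
  refine ⟨p, q, max N 1, ?_⟩
  intro n hn
  have hnN : N ≤ n := le_trans (le_max_left _ _) hn
  have hn0 : 0 < n := lt_of_lt_of_le (lt_of_lt_of_le Nat.one_pos (le_max_right _ _)) hn
  obtain ⟨hq, heq⟩ := hmain n hnN
  refine ⟨hq, ?_⟩
  rw [← heq hn0]
  congr 2
  -- the cardinality identification
  set pt : Fin n := ⟨0, hn0⟩ with hpt
  have hpath : ∀ (σ : Fin k → Equiv.Perm (Fin n)) (j : Fin m),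
      PRat.pathF (L := L) r σ pt (j, PRat.endP r j) = (FreeGroup.lift σ (Sl.get j)) pt := by
    intro σ j
    rw [PRat.freeGroup_eval]
    show PRat.path r σ pt j (min (r j).length L) = _
    rw [min_eq_left (hlen j)]
    unfold PRat.path
    rw [List.take_of_length_le le_rfl, hr]
  have hgetH : ∀ j : Fin m, Sl.get j ∈ H := by
    intro j
    have hmem : Sl.get j ∈ Sl := List.get_mem Sl j
    rcases List.mem_cons.mp hmem with h1 | h2
    · rw [h1]; exact H.one_mem
    · have : Sl.get j ∈ Sset := hSfin.mem_toFinset.mp (by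
        exact Finset.mem_coe.mp (by exact_mod_cast Finset.mem_toList.mp h2))
      rw [← hSclos]
      exact Subgroup.subset_closure this
  have hiff : ∀ σ : Fin k → Equiv.Perm (Fin n),
      (∀ j, PRat.pathF (L := L) r σ pt (j, PRat.endP r j) = pt) ↔
      (∀ w ∈ H, ∀ hn' : 0 < n, (FreeGroup.lift σ) w ⟨0, hn'⟩ = ⟨0, hn'⟩) := by
    intro σ
    constructor
    · intro hC w hw hn'
      have hwK : ∀ u ∈ H, (FreeGroup.lift σ) u pt = pt := by
        have hle : H ≤ Subgroup.comap (FreeGroup.lift σ)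
            (MulAction.stabilizer (Equiv.Perm (Fin n)) pt) := by
          rw [← hSclos, Subgroup.closure_le]
          intro x hx
          have : ∃ j : Fin m, Sl.get j = x := by
            have hxl : x ∈ Sl :=
              List.mem_cons.mpr (Or.inr (Finset.mem_toList.mpr (hSfin.mem_toFinset.mpr hx)))
            obtain ⟨j, hj⟩ := List.mem_iff_get.mp hxl
            exact ⟨j, hj⟩
          obtain ⟨j, rfl⟩ := this
          have := hC j
          rw [hpath σ j] at this
          simpa [Subgroup.mem_comap, MulAction.mem_stabilizer_iff, Equiv.Perm.smul_def] using this
        intro u hu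
        have := hle hu
        simpa [Subgroup.mem_comap, MulAction.mem_stabilizer_iff, Equiv.Perm.smul_def] using this
      exact hwK w hw
    · intro hα j
      rw [hpath σ j]
      exact hα _ (hgetH j) hn0
  have hcard : Nat.card {α : FreeGroup (Fin k) →* Equiv.Perm (Fin n) //
        ∀ w ∈ H, ∀ hn : 0 < n, α w ⟨0, hn⟩ = ⟨0, hn⟩}
      = (Finset.univ.filter (fun σ : Fin k → Equiv.Perm (Fin n) =>
          ∀ j, PRat.pathF (L := L) r σ pt (j, PRat.endP r j) = pt)).card := by
    rw [← Nat.card_congr (Equiv.subtypeEquiv (FreeGroup.lift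
      (α := Fin k) (β := Equiv.Perm (Fin n))) hiff)]
    rw [Nat.card_eq_fintype_card, Fintype.card_subtype]
  rw [hcard]
end

section
/- Let w ∈ F_k be measure preserving and let x_1 be an element of a basis of F_k. Then for every finite group G and every g ∈ G, the number of surjective homomorphisms α : F_k → G with α(w) = g equals the number of surjective homomorphisms α : F_k → G with α(x_1) = g. -/
open Function

/-- A subset `s` of a group `G` is a free basis of `G` if the induced homomorphism
`FreeGroup s →* G` is bijective, i.e. `s` freely generates `G`. -/
def IsFreeBasis {G : Type*} [Group G] (s : Set G) : Prop :=
  Function.Bijective (FreeGroup.lift ((↑) : s → G) : FreeGroup s →* G)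

/-- A word `w ∈ F_k` is measure preserving if for every finite group `G` and every `g ∈ G`,
the number of homomorphisms `α : F_k →* G` with `α w = g` equals `|G| ^ (k-1)`. -/
def IsMeasurePreservingWord {k : ℕ} (w : FreeGroup (Fin k)) : Prop :=
  ∀ (G : Type) [Group G] [Fintype G] (g : G),
    Nat.card {α : FreeGroup (Fin k) →* G // α w = g} = Fintype.card G ^ (k - 1)

section Aux

variable {k : ℕ}

private lemma finiteHom (A : Type*) (G : Type*) [Group G] [Finite G] [Finite A] :
    Finite (FreeGroup A →* G) :=
  Finite.of_injective (fun α => (fun i => α (FreeGroup.of i) : A → G))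
    (fun α β h => FreeGroup.ext_hom _ _ fun a => congrFun h a)

private lemma finiteSubgroup (G : Type*) [Group G] [Finite G] : Finite (Subgroup G) :=
  Finite.of_injective (fun H => (H : Set G)) SetLike.coe_injective

private lemma nat_card_sigma {ι : Type*} [Fintype ι] (f : ι → Type*) [∀ i, Finite (f i)] :
    Nat.card (Σ i, f i) = ∑ i, Nat.card (f i) := by
  classical
  letI := fun i => Fintype.ofFinite (f i)
  rw [Nat.card_eq_fintype_card, Fintype.card_sigma]
  exact Finset.sum_congr rfl fun i _ => (Nat.card_eq_fintype_card).symm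

/-- Homs with given range `H` and value `g` at `u` correspond to surjective homs to `H`. -/
private def rangeEquiv {G : Type*} [Group G] (u : FreeGroup (Fin k)) (g : G) (H : Subgroup G) :
    {β : FreeGroup (Fin k) →* H // Surjective β ∧ ↑(β u) = g} ≃
      {α : FreeGroup (Fin k) →* G // α u = g ∧ α.range = H} where
  toFun β := ⟨H.subtype.comp β.1, by simpa using β.2.2, by
    rw [MonoidHom.range_comp, MonoidHom.range_eq_top.2 β.2.1, ← MonoidHom.range_eq_map,
      Subgroup.range_subtype]⟩
  invFun α := ⟨(α.1).codRestrict H (fun x => by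
    have h := α.2.2
    rw [SetLike.ext_iff] at h
    exact (h _).1 (MonoidHom.mem_range.2 ⟨x, rfl⟩)), by
    refine ⟨?_, α.2.1⟩
    rintro ⟨y, hy⟩
    rw [← α.2.2] at hy
    obtain ⟨x, hx⟩ := hy
    exact ⟨x, Subtype.ext hx⟩⟩
  left_inv β := Subtype.ext (by ext x; rfl)
  right_inv α := Subtype.ext (by ext x; rfl)

/-- Counting homs with a condition on range, partitioned over subgroups. -/
private lemma card_eq_sum {G : Type*} [Group G] [Finite G] [Fintype (Subgroup G)]
    (u : FreeGroup (Fin k)) (g : G) :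
    Nat.card {α : FreeGroup (Fin k) →* G // α u = g} =
      ∑ H : Subgroup G,
        Nat.card {β : FreeGroup (Fin k) →* H // Surjective β ∧ ↑(β u) = g} := by
  classical
  haveI : Finite (FreeGroup (Fin k) →* G) := finiteHom _ G
  haveI : ∀ H : Subgroup G, Finite (FreeGroup (Fin k) →* H) := fun H => finiteHom _ H
  have e : {α : FreeGroup (Fin k) →* G // α u = g} ≃
      Σ H : Subgroup G, {β : FreeGroup (Fin k) →* H // Surjective β ∧ ↑(β u) = g} := by
    refine ((Equiv.sigmaFiberEquiv
      (fun α : {α : FreeGroup (Fin k) →* G // α u = g} => (α.1).range)).symm).trans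
      (Equiv.sigmaCongrRight fun H => ?_)
    exact ((Equiv.subtypeSubtypeEquivSubtypeInter _ _).trans (rangeEquiv u g H).symm)
  rw [Nat.card_congr e, nat_card_sigma]

end Aux

section X1

variable {k : ℕ}

/-- Precomposition with the mul-equiv coming from a free basis, turned into a hom-set equiv. -/
private noncomputable def basisHomEquiv {s : Set (FreeGroup (Fin k))} (hs : IsFreeBasis s)
    (G : Type*) [Group G] : (↥s → G) ≃ (FreeGroup (Fin k) →* G) := by
  classical
  let e : FreeGroup ↥s ≃* FreeGroup (Fin k) :=
    MulEquiv.ofBijective (FreeGroup.lift ((↑) : ↥s → FreeGroup (Fin k))) hs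
  exact (FreeGroup.lift).trans
    { toFun := fun β => β.comp e.symm.toMonoidHom
      invFun := fun α => α.comp e.toMonoidHom
      left_inv := fun β => by ext x; simp
      right_inv := fun α => by ext x; simp }

private lemma basisHomEquiv_apply {s : Set (FreeGroup (Fin k))} (hs : IsFreeBasis s)
    {G : Type*} [Group G] (f : ↥s → G) (a : ↥s) :
    basisHomEquiv hs G f (a : FreeGroup (Fin k)) = f a := by
  classical
  show (FreeGroup.lift f).comp
    (MulEquiv.ofBijective (FreeGroup.lift ((↑) : ↥s → FreeGroup (Fin k))) hs).symm.toMonoidHom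
      (a : FreeGroup (Fin k)) = f a
  have h1 : (MulEquiv.ofBijective (FreeGroup.lift ((↑) : ↥s → FreeGroup (Fin k))) hs).symm
      (a : FreeGroup (Fin k)) = FreeGroup.of a := by
    apply (MulEquiv.ofBijective (FreeGroup.lift ((↑) : ↥s → FreeGroup (Fin k))) hs).injective
    simp [MulEquiv.apply_symm_apply]
    exact (FreeGroup.lift_apply_of (f := ((↑) : ↥s → FreeGroup (Fin k)))).symm
  simp [MonoidHom.comp_apply, h1]

/-- The number of homs with `α x₁ = g` does not depend on `g`, when `x₁` belongs to a basis. -/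
private lemma card_fiber_basis_const {x₁ : FreeGroup (Fin k)}
    {s : Set (FreeGroup (Fin k))} (hs : IsFreeBasis s) (hm : x₁ ∈ s)
    (G : Type) [Group G] [Fintype G] (g g' : G) :
    Nat.card {α : FreeGroup (Fin k) →* G // α x₁ = g} =
      Nat.card {α : FreeGroup (Fin k) →* G // α x₁ = g'} := by
  classical
  set a : ↥s := ⟨x₁, hm⟩
  have E : ∀ h : G, {f : ↥s → G // f a = h} ≃ {α : FreeGroup (Fin k) →* G // α x₁ = h} :=
    fun h => (Equiv.subtypeEquiv (basisHomEquiv hs G)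
      (fun f => by rw [show x₁ = (a : FreeGroup (Fin k)) from rfl, basisHomEquiv_apply hs f a]))
  have U : {f : ↥s → G // f a = g} ≃ {f : ↥s → G // f a = g'} :=
    { toFun := fun f => ⟨Function.update f.1 a g', Function.update_self _ _ _⟩
      invFun := fun f => ⟨Function.update f.1 a g, Function.update_self _ _ _⟩
      left_inv := fun ⟨f, hf⟩ => Subtype.ext (by
        show Function.update (Function.update f a g') a g = f
        rw [Function.update_idem, ← hf, Function.update_eq_self])
      right_inv := fun ⟨f, hf⟩ => Subtype.ext (by
        show Function.update (Function.update f a g) a g' = f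
        rw [Function.update_idem, ← hf, Function.update_eq_self]) }
  rw [← Nat.card_congr (E g), ← Nat.card_congr (E g'), Nat.card_congr U]

private lemma sum_card_fibers (G : Type) [Group G] [Fintype G] (u : FreeGroup (Fin k)) :
    ∑ h : G, Nat.card {α : FreeGroup (Fin k) →* G // α u = h} =
      Nat.card (FreeGroup (Fin k) →* G) := by
  haveI : Finite (FreeGroup (Fin k) →* G) := finiteHom _ G
  rw [← nat_card_sigma]
  exact Nat.card_congr (Equiv.sigmaFiberEquiv fun α : FreeGroup (Fin k) →* G => α u)

/-- If `w` is measure preserving and `x₁` is a basis element, the fiber counts agree. -/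
private lemma fiber_count_eq {w x₁ : FreeGroup (Fin k)} (hw : IsMeasurePreservingWord w)
    (hx₁ : ∃ s : Set (FreeGroup (Fin k)), IsFreeBasis s ∧ x₁ ∈ s)
    (G : Type) [Group G] [Fintype G] (g : G) :
    Nat.card {α : FreeGroup (Fin k) →* G // α w = g} =
      Nat.card {α : FreeGroup (Fin k) →* G // α x₁ = g} := by
  obtain ⟨s, hs, hm⟩ := hx₁
  have h1 : ∑ h : G, Nat.card {α : FreeGroup (Fin k) →* G // α w = h} =
      ∑ h : G, Nat.card {α : FreeGroup (Fin k) →* G // α x₁ = h} := by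
    rw [sum_card_fibers, sum_card_fibers]
  have h2 : ∀ h : G, Nat.card {α : FreeGroup (Fin k) →* G // α w = h} =
      Fintype.card G ^ (k - 1) := fun h => hw G h
  have h3 : ∀ h : G, Nat.card {α : FreeGroup (Fin k) →* G // α x₁ = h} =
      Nat.card {α : FreeGroup (Fin k) →* G // α x₁ = g} := fun h =>
    card_fiber_basis_const hs hm G h g
  rw [Finset.sum_congr rfl fun h _ => h2 h, Finset.sum_congr rfl fun h _ => h3 h,
    Finset.sum_const, Finset.sum_const, Finset.card_univ, smul_eq_mul, smul_eq_mul] at h1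
  rw [h2 g]
  exact Nat.eq_of_mul_eq_mul_left Fintype.card_pos h1

end X1

section Induction

variable {k : ℕ}

private lemma epi_count_aux (w v : FreeGroup (Fin k))
    (hN : ∀ (G : Type) [Group G] [Fintype G] (g : G),
      Nat.card {α : FreeGroup (Fin k) →* G // α w = g} =
        Nat.card {α : FreeGroup (Fin k) →* G // α v = g}) :
    ∀ (n : ℕ) (G : Type) [Group G] [Fintype G], Fintype.card G = n → ∀ g : G,
      Nat.card {α : FreeGroup (Fin k) →* G // Surjective α ∧ α w = g} =
        Nat.card {α : FreeGroup (Fin k) →* G // Surjective α ∧ α v = g} := by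
  intro n
  induction n using Nat.strong_induction_on with
  | _ n IH =>
    intro G _ _ hn g
    classical
    haveI : Finite (Subgroup G) := finiteSubgroup G
    letI : Fintype (Subgroup G) := Fintype.ofFinite _
    -- terms for proper subgroups agree by induction
    have hterm : ∀ H : Subgroup G, H ≠ ⊤ →
        Nat.card {β : FreeGroup (Fin k) →* H // Surjective β ∧ ↑(β w) = g} =
          Nat.card {β : FreeGroup (Fin k) →* H // Surjective β ∧ ↑(β v) = g} := by
      intro H hH
      by_cases hg : g ∈ H
      · have hlt : Fintype.card H < n := by
          rw [← hn, ← Nat.card_eq_fintype_card, ← Nat.card_eq_fintype_card]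
          exact lt_of_le_of_ne H.card_le_card_group
            (fun hc => hH (Subgroup.eq_top_of_card_eq H hc))
        have key := IH _ hlt H rfl (⟨g, hg⟩ : H)
        have e : ∀ u : FreeGroup (Fin k),
            {β : FreeGroup (Fin k) →* H // Surjective β ∧ ↑(β u) = g} ≃
              {β : FreeGroup (Fin k) →* H // Surjective β ∧ β u = (⟨g, hg⟩ : H)} :=
          fun u => Equiv.subtypeEquivRight fun β =>
            and_congr_right fun _ => ⟨fun h => Subtype.ext h, fun h => congrArg _ h⟩
        rw [Nat.card_congr (e w), Nat.card_congr (e v)]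
        exact key
      · have hempty : ∀ u : FreeGroup (Fin k),
            IsEmpty {β : FreeGroup (Fin k) →* H // Surjective β ∧ ↑(β u) = g} := fun u =>
          ⟨fun β => hg (β.2.2 ▸ (β.1 u).2)⟩
        haveI := hempty w; haveI := hempty v
        rw [Nat.card_of_isEmpty, Nat.card_of_isEmpty]
    -- the top term is the surjective count
    have htop : ∀ u : FreeGroup (Fin k),
        Nat.card {β : FreeGroup (Fin k) →* (⊤ : Subgroup G) // Surjective β ∧ ↑(β u) = g} =
          Nat.card {α : FreeGroup (Fin k) →* G // Surjective α ∧ α u = g} := fun u =>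
      Nat.card_congr ((rangeEquiv u g ⊤).trans (Equiv.subtypeEquivRight fun α => by
        rw [MonoidHom.range_eq_top]; exact and_comm))
    have hsum := hN G g
    rw [card_eq_sum w g, card_eq_sum v g,
      ← Finset.add_sum_erase Finset.univ _ (Finset.mem_univ (⊤ : Subgroup G)),
      ← Finset.add_sum_erase Finset.univ _ (Finset.mem_univ (⊤ : Subgroup G))] at hsum
    rw [Finset.sum_congr rfl (fun H hH =>
      hterm H (Finset.ne_of_mem_erase hH))] at hsum
    have := Nat.add_right_cancel hsum
    rw [htop w, htop v] at this
    exact this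

end Induction

/-- if `w ∈ F_k` is measure preserving and `x₁` is an element of some basis of
`F_k`, then for every finite group `G` and every `g ∈ G`, the number of surjective
homomorphisms `α : F_k →* G` with `α w = g` equals the number of surjective homomorphisms
with `α x₁ = g`. -/
theorem measurePreserving_epi_count {k : ℕ} (w x₁ : FreeGroup (Fin k))
    (hw : IsMeasurePreservingWord w)
    (hx₁ : ∃ s : Set (FreeGroup (Fin k)), IsFreeBasis s ∧ x₁ ∈ s) :
    ∀ (G : Type) [Group G] [Fintype G] (g : G),
      Nat.card {α : FreeGroup (Fin k) →* G // Function.Surjective α ∧ α w = g} =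
        Nat.card {α : FreeGroup (Fin k) →* G // Function.Surjective α ∧ α x₁ = g} := by
  intro G _ _ g
  exact epi_count_aux w x₁ (fun G _ _ g => fiber_count_eq hw hx₁ G g)
    (Fintype.card G) G rfl g
end

section
/- For every n ≥ 2, if σ and τ are two independent uniformly random permutations in S_n, then the probability that the commutator σ τ σ^{-1} τ^{-1} fixes the point 1 equals 1/(n−1). Equivalently, the number of pairs (σ, τ) ∈ S_n × S_n with στσ^{-1}τ^{-1}(1) = 1 equals (n!)^2/(n−1). -/
open Finset Equiv

def prodFstEquiv {α β : Type*} (b : α) (R : α × β → Prop) :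
    {q : α × β // q.1 = b ∧ R q} ≃ {e : β // R (b, e)} where
  toFun q := ⟨q.1.2, by obtain ⟨⟨x, e⟩, h1, h2⟩ := q; dsimp at *; subst h1; exact h2⟩
  invFun e := ⟨(b, e.1), rfl, e.2⟩
  left_inv := by rintro ⟨⟨x, e⟩, rfl, h2⟩; rfl
  right_inv := by rintro ⟨e, h⟩; rfl

lemma decomposeFin_fst {n : ℕ} (σ : Equiv.Perm (Fin (n+1))) :
    (Equiv.Perm.decomposeFin σ).1 = σ 0 := by
  have h := Equiv.Perm.decomposeFin_symm_apply_zero (Equiv.Perm.decomposeFin σ).1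
    (Equiv.Perm.decomposeFin σ).2
  rw [Prod.mk.eta, Equiv.symm_apply_apply] at h; exact h.symm

lemma count_one (n : ℕ) (a b : Fin (n + 1)) :
    (Finset.univ.filter (fun σ : Equiv.Perm (Fin (n + 1)) => σ a = b)).card = n.factorial := by
  rw [← Fintype.card_subtype]
  have e1 : {σ : Equiv.Perm (Fin (n+1)) // σ a = b} ≃ {σ : Equiv.Perm (Fin (n+1)) // σ 0 = b ∧ True} :=
    Equiv.subtypeEquiv (Equiv.mulRight (Equiv.swap 0 a)) (fun σ => by
      simp [Equiv.Perm.mul_apply])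
  have e2 : {σ : Equiv.Perm (Fin (n+1)) // σ 0 = b ∧ True} ≃
      {q : Fin (n+1) × Equiv.Perm (Fin n) // q.1 = b ∧ True} :=
    Equiv.subtypeEquiv Equiv.Perm.decomposeFin (fun σ => by rw [decomposeFin_fst])
  have e3 := prodFstEquiv b (fun _ : Fin (n+1) × Equiv.Perm (Fin n) => True)
  rw [Fintype.card_congr ((e1.trans e2).trans e3), Fintype.card_subtype]
  simp [Fintype.card_perm]

lemma count_two (n : ℕ) (a b c d : Fin (n + 2)) (hac : a ≠ c) (hbd : b ≠ d) :
    (Finset.univ.filter (fun σ : Equiv.Perm (Fin (n + 2)) => σ a = b ∧ σ c = d)).card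
      = n.factorial := by
  rw [← Fintype.card_subtype]
  set c' : Fin (n+2) := Equiv.swap 0 a c with hc'def
  have hc' : c' ≠ 0 := by
    intro h
    apply hac
    have := congrArg (Equiv.swap 0 a) h
    rw [Equiv.swap_apply_self, Equiv.swap_apply_left] at this
    exact this.symm
  have e1 : {σ : Equiv.Perm (Fin (n+2)) // σ a = b ∧ σ c = d} ≃
      {σ : Equiv.Perm (Fin (n+2)) // σ 0 = b ∧ σ c' = d} :=
    Equiv.subtypeEquiv (Equiv.mulRight (Equiv.swap 0 a)) (fun σ => by
      simp only [Equiv.coe_mulRight, Equiv.Perm.mul_apply, Equiv.swap_apply_left, hc'def,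
        Equiv.swap_apply_self])
  obtain ⟨i, hi⟩ := Fin.eq_succ_of_ne_zero hc'
  have e2 : {σ : Equiv.Perm (Fin (n+2)) // σ 0 = b ∧ σ c' = d} ≃
      {q : Fin (n+2) × Equiv.Perm (Fin (n+1)) //
        q.1 = b ∧ Equiv.Perm.decomposeFin.symm q i.succ = d} :=
    Equiv.subtypeEquiv Equiv.Perm.decomposeFin (fun σ => by
      rw [decomposeFin_fst, Equiv.symm_apply_apply, hi])
  have e3 := prodFstEquiv b
    (fun q : Fin (n+2) × Equiv.Perm (Fin (n+1)) => Equiv.Perm.decomposeFin.symm q i.succ = d)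
  have hj0 : Equiv.swap 0 b d ≠ 0 := by
    intro h
    apply hbd
    have := congrArg (Equiv.swap 0 b) h
    rw [Equiv.swap_apply_self, Equiv.swap_apply_left] at this
    exact this.symm
  obtain ⟨j, hj⟩ := Fin.eq_succ_of_ne_zero hj0
  have e4 : {e : Equiv.Perm (Fin (n+1)) //
      Equiv.Perm.decomposeFin.symm (b, e) i.succ = d} ≃
      {e : Equiv.Perm (Fin (n+1)) // e i = j} :=
    Equiv.subtypeEquiv (Equiv.refl _) (fun e => by
      rw [Equiv.Perm.decomposeFin_symm_apply_succ, Equiv.refl_apply]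
      constructor
      · intro h
        have h2 : (e i).succ = Equiv.swap 0 b d := by
          have := congrArg (Equiv.swap 0 b) h
          rwa [Equiv.swap_apply_self] at this
        rw [hj] at h2
        exact Fin.succ_injective _ h2
      · intro h
        rw [h, ← hj, Equiv.swap_apply_self])
  rw [Fintype.card_congr ((e1.trans e2).trans (e3.trans e4)), Fintype.card_subtype]
  exact count_one n i j

lemma card_and_comm {γ : Type*} [Fintype γ] (p q : γ → Prop)
    [DecidablePred p] [DecidablePred q] :
    (Finset.univ.filter (fun x => p x ∧ q x)).card
      = (Finset.univ.filter (fun x => q x ∧ p x)).card := by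
  congr 1
  apply Finset.filter_congr
  intro x _
  exact and_comm

lemma main_aux (m : ℕ) (z : Fin (m+2)) :
    (Finset.univ.filter (fun p : Equiv.Perm (Fin (m+2)) × Equiv.Perm (Fin (m+2)) =>
      p.1 (p.2 z) = p.2 (p.1 z))).card * (m+1) = ((m+2).factorial)^2 := by
  have f1 : (m+1).factorial = (m+1) * m.factorial := Nat.factorial_succ m
  have f2 : (m+2).factorial = (m+2) * (m+1).factorial := Nat.factorial_succ (m+1)
  -- value of the double-constraint count
  have hD : ∀ (β : Equiv.Perm (Fin (m+2))) (v : Fin (m+2)),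
      (Finset.univ.filter (fun α : Equiv.Perm (Fin (m+2)) => α z = v ∧ α (β z) = β v)).card
        = (if β z = z ∧ β v = v then (m+1).factorial else 0)
          + (if ¬(β z = z) ∧ ¬(β v = v) then m.factorial else 0) := by
    intro β v
    by_cases h1 : β z = z <;> by_cases h2 : β v = v
    · rw [if_pos ⟨h1, h2⟩, if_neg (by tauto)]
      have he : (Finset.univ.filter (fun α : Equiv.Perm (Fin (m+2)) => α z = v ∧ α (β z) = β v))
          = Finset.univ.filter (fun α => α z = v) := by
        apply Finset.filter_congr
        intro α _
        rw [h1, h2]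
        tauto
      rw [he, count_one]
      omega
    · rw [if_neg (by tauto), if_neg (by tauto)]
      rw [Finset.filter_false_of_mem, Finset.card_empty]
      rintro α - ⟨e1, e2⟩
      rw [h1] at e2
      rw [e1] at e2
      exact h2 e2.symm
    · rw [if_neg (by tauto), if_neg (by tauto)]
      rw [Finset.filter_false_of_mem, Finset.card_empty]
      rintro α - ⟨e1, e2⟩
      rw [h2, ← e1] at e2
      exact h1 (α.injective e2)
    · rw [if_neg (by tauto), if_pos ⟨h1, h2⟩, Nat.zero_add]
      exact count_two m z v (β z) (β v) (fun h => h1 h.symm) (fun h => h2 h.symm)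
  -- card of permutations fixing both z and v
  have hPP : ∀ v : Fin (m+2),
      (Finset.univ.filter (fun β : Equiv.Perm (Fin (m+2)) => β z = z ∧ β v = v)).card
        = if v = z then (m+1).factorial else m.factorial := by
    intro v
    by_cases hv : v = z
    · subst hv
      rw [if_pos rfl]
      have he : (Finset.univ.filter (fun β : Equiv.Perm (Fin (m+2)) => β v = v ∧ β v = v))
          = Finset.univ.filter (fun β => β v = v) := by
        apply Finset.filter_congr
        intro β _
        tauto
      rw [he, count_one]
    · rw [if_neg hv]
      exact count_two m z z v v (fun h => hv h.symm) (fun h => hv h.symm)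
  -- card of permutations moving both z and v
  have hNN : ∀ v : Fin (m+2),
      (Finset.univ.filter (fun β : Equiv.Perm (Fin (m+2)) => ¬(β z = z) ∧ ¬(β v = v))).card
        = if v = z then (m*m+2*m+1) * m.factorial else (m*m+m+1) * m.factorial := by
    intro v
    have S1 := Finset.card_filter_add_card_filter_not
      (s := Finset.univ.filter (fun β : Equiv.Perm (Fin (m+2)) => ¬(β z = z)))
      (p := fun β => β v = v)
    rw [Finset.filter_filter, Finset.filter_filter] at S1
    have S2 := Finset.card_filter_add_card_filter_not
      (s := Finset.univ.filter (fun β : Equiv.Perm (Fin (m+2)) => β v = v))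
      (p := fun β => β z = z)
    rw [Finset.filter_filter, Finset.filter_filter] at S2
    have S3 := Finset.card_filter_add_card_filter_not
      (s := (Finset.univ : Finset (Equiv.Perm (Fin (m+2)))))
      (p := fun β => β z = z)
    have htot : (Finset.univ : Finset (Equiv.Perm (Fin (m+2)))).card = (m+2).factorial := by
      rw [Finset.card_univ, Fintype.card_perm, Fintype.card_fin]
    have A1 : (Finset.univ.filter (fun β : Equiv.Perm (Fin (m+2)) => β v = v ∧ β z = z)).card
        = (Finset.univ.filter (fun β : Equiv.Perm (Fin (m+2)) => β z = z ∧ β v = v)).card :=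
      card_and_comm _ _
    have A2 : (Finset.univ.filter (fun β : Equiv.Perm (Fin (m+2)) => β v = v ∧ ¬(β z = z))).card
        = (Finset.univ.filter (fun β : Equiv.Perm (Fin (m+2)) => ¬(β z = z) ∧ β v = v)).card :=
      card_and_comm _ _
    have cz : (Finset.univ.filter (fun β : Equiv.Perm (Fin (m+2)) => β z = z)).card
        = (m+1).factorial := count_one (m+1) z z
    have cv : (Finset.univ.filter (fun β : Equiv.Perm (Fin (m+2)) => β v = v)).card
        = (m+1).factorial := count_one (m+1) v v
    have cpp := hPP v
    by_cases hv : v = z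
    · rw [if_pos hv]
      rw [if_pos hv] at cpp
      have Xeq : (Finset.univ.filter
            (fun β : Equiv.Perm (Fin (m+2)) => ¬(β z = z) ∧ ¬(β v = v))).card
          + 2 * (m+1).factorial = (m+2).factorial + (m+1).factorial := by omega
      zify at Xeq f1 f2 ⊢
      linear_combination Xeq + f2 + (m+1) * f1
    · rw [if_neg hv]
      rw [if_neg hv] at cpp
      have Xeq : (Finset.univ.filter
            (fun β : Equiv.Perm (Fin (m+2)) => ¬(β z = z) ∧ ¬(β v = v))).card
          + 2 * (m+1).factorial = (m+2).factorial + m.factorial := by omega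
      zify at Xeq f1 f2 ⊢
      linear_combination Xeq + f2 + m * f1
  -- expand the pair count as a double sum of fibered counts
  have hmain : (Finset.univ.filter
        (fun p : Equiv.Perm (Fin (m+2)) × Equiv.Perm (Fin (m+2)) =>
          p.1 (p.2 z) = p.2 (p.1 z))).card
      = ∑ β : Equiv.Perm (Fin (m+2)), ∑ v : Fin (m+2),
          (Finset.univ.filter
            (fun α : Equiv.Perm (Fin (m+2)) => α z = v ∧ α (β z) = β v)).card := by
    rw [Finset.card_filter, ← Finset.univ_product_univ, Finset.sum_product, Finset.sum_comm]
    refine Finset.sum_congr rfl (fun β _ => ?_)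
    have h1 : ∀ α : Equiv.Perm (Fin (m+2)), (if α (β z) = β (α z) then (1:ℕ) else 0)
        = ∑ v : Fin (m+2), (if α z = v ∧ α (β z) = β v then 1 else 0) := by
      intro α
      rw [Finset.sum_eq_single (α z) (fun v _ hv => if_neg (fun hc => hv hc.1.symm))
        (fun h => absurd (Finset.mem_univ _) h)]
      simp
    rw [Finset.sum_congr rfl (fun α _ => h1 α), Finset.sum_comm]
    exact Finset.sum_congr rfl (fun v _ => (Finset.card_filter _ _).symm)
  rw [hmain]
  have hstep : ∀ β : Equiv.Perm (Fin (m+2)), ∀ v : Fin (m+2),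
      (Finset.univ.filter
        (fun α : Equiv.Perm (Fin (m+2)) => α z = v ∧ α (β z) = β v)).card
      = (if β z = z ∧ β v = v then (m+1).factorial else 0)
        + (if ¬(β z = z) ∧ ¬(β v = v) then m.factorial else 0) := hD
  rw [Finset.sum_congr rfl (fun β _ => Finset.sum_congr rfl (fun v _ => hstep β v)),
    Finset.sum_comm]
  -- evaluate the inner sum over β for each v
  have hinner : ∀ v : Fin (m+2),
      (∑ β : Equiv.Perm (Fin (m+2)),
        ((if β z = z ∧ β v = v then (m+1).factorial else 0)
          + (if ¬(β z = z) ∧ ¬(β v = v) then m.factorial else 0)))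
      = (Finset.univ.filter
            (fun β : Equiv.Perm (Fin (m+2)) => β z = z ∧ β v = v)).card * (m+1).factorial
        + (Finset.univ.filter
            (fun β : Equiv.Perm (Fin (m+2)) => ¬(β z = z) ∧ ¬(β v = v))).card * m.factorial := by
    intro v
    rw [Finset.sum_add_distrib, ← Finset.sum_filter, ← Finset.sum_filter,
      Finset.sum_const, Finset.sum_const, smul_eq_mul, smul_eq_mul]
  rw [Finset.sum_congr rfl (fun v _ => hinner v)]
  have hval : ∀ v : Fin (m+2),
      ((Finset.univ.filter
            (fun β : Equiv.Perm (Fin (m+2)) => β z = z ∧ β v = v)).card * (m+1).factorial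
        + (Finset.univ.filter
            (fun β : Equiv.Perm (Fin (m+2)) => ¬(β z = z) ∧ ¬(β v = v))).card * m.factorial)
      = if v = z then
          (m+1).factorial * (m+1).factorial + ((m*m+2*m+1) * m.factorial) * m.factorial
        else
          m.factorial * (m+1).factorial + ((m*m+m+1) * m.factorial) * m.factorial := by
    intro v
    rw [hPP v, hNN v]
    by_cases hv : v = z
    · rw [if_pos hv, if_pos hv, if_pos hv]
    · rw [if_neg hv, if_neg hv, if_neg hv]
  rw [Finset.sum_congr rfl (fun v _ => hval v)]
  rw [Finset.sum_ite, Finset.sum_const, Finset.sum_const, Finset.filter_eq',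
    if_pos (Finset.mem_univ z), Finset.filter_ne',
    Finset.card_erase_of_mem (Finset.mem_univ z), Finset.card_singleton, Finset.card_univ,
    Fintype.card_fin]
  have hcard : m + 2 - 1 = m + 1 := rfl
  rw [hcard, smul_eq_mul, smul_eq_mul, one_mul]
  rw [f2, f1]
  ring

/-- for `n ≥ 2`, the number of pairs `(σ, τ)` of permutations of `{1,…,n}` whose
commutator `σ τ σ⁻¹ τ⁻¹` fixes a given point equals `(n!)^2 / (n-1)`; equivalently, the
probability that the commutator of two independent uniformly random permutations fixes the
point is `1 / (n-1)`. -/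
theorem commutator_fixes_point_count (n : ℕ) (hn : 2 ≤ n) :
    Nat.card {p : Equiv.Perm (Fin n) × Equiv.Perm (Fin n) //
        (p.1 * p.2 * p.1⁻¹ * p.2⁻¹) ⟨0, by omega⟩ = ⟨0, by omega⟩} * (n - 1) =
      n.factorial ^ 2 := by
  obtain ⟨m, rfl⟩ : ∃ m, n = m + 2 := ⟨n - 2, by omega⟩
  set z : Fin (m + 2) := ⟨0, by omega⟩ with hz
  have e : {p : Equiv.Perm (Fin (m+2)) × Equiv.Perm (Fin (m+2)) //
        (p.1 * p.2 * p.1⁻¹ * p.2⁻¹) z = z}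
      ≃ {p : Equiv.Perm (Fin (m+2)) × Equiv.Perm (Fin (m+2)) //
        p.1 (p.2 z) = p.2 (p.1 z)} := by
    refine Equiv.subtypeEquiv ((Equiv.inv _).prodCongr (Equiv.inv _)) (fun p => ?_)
    obtain ⟨σ, τ⟩ := p
    simp only [Equiv.prodCongr_apply, Equiv.inv_apply, Prod.map, Equiv.Perm.mul_apply]
    constructor
    · intro h
      have h1 : τ (σ⁻¹ (τ⁻¹ z)) = σ⁻¹ z :=
        σ.injective (h.trans (σ.apply_symm_apply z).symm)
      have h2 := congrArg (fun x => τ⁻¹ x) h1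
      replace h2 := (τ.symm_apply_apply _).symm.trans h2
      exact h2
    · intro h
      rw [h]; exact (congrArg σ (τ.apply_symm_apply _)).trans (σ.apply_symm_apply _)
  rw [Nat.card_congr e, Nat.card_eq_fintype_card, Fintype.card_subtype]
  have : m + 2 - 1 = m + 1 := rfl
  rw [this]
  exact main_aux m z
end
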